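/- There exist a strictly increasing continuous bijection q : [0,1] → [0,1] that is continuously differentiable on (0,1) with a derivative extending to a Lipschitz continuous function on [0,1], and a Borel set A ⊆ [0,1] of Lebesgue measure zero, such that the preimage q^{-1}(A) has strictly positive Lebesgue measure. In particular, the inverse function q^{-1} : [0,1] → [0,1] is not absolutely continuous. -/

import Mathlib

open MeasureTheory Set Filter Topology Metric

/-- Example 2.8 (deterministic content): there exist a strictly increasing
continuous bijection `q : [0,1] → [0,1]`, continuously differentiable on
`(0,1)` with derivative extending to a Lipschitz function on `[0,1]`, and a
Borel set `A ⊆ [0,1]` of Lebesgue measure zero, whose preimage under `q` has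
strictly positive Lebesgue measure (so the inverse `q⁻¹` is not absolutely
continuous). -/
theorem stmt_8 :
    ∃ (q q' : ℝ → ℝ) (K : NNReal) (A : Set ℝ),
      StrictMonoOn q (Set.Icc 0 1) ∧
      ContinuousOn q (Set.Icc 0 1) ∧
      Set.BijOn q (Set.Icc 0 1) (Set.Icc 0 1) ∧
      (∀ x ∈ Set.Ioo (0:ℝ) 1, HasDerivAt q (q' x) x) ∧
      ContinuousOn q' (Set.Ioo 0 1) ∧
      LipschitzOnWith K q' (Set.Icc 0 1) ∧
      A ⊆ Set.Icc 0 1 ∧ MeasurableSet A ∧ volume A = 0 ∧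
      0 < volume (Set.Icc (0:ℝ) 1 ∩ q ⁻¹' A) := by
  classical
  -- an enumeration of the rationals
  set e : ℕ → ℝ := fun n => (((Denumerable.eqv ℚ).symm n : ℚ) : ℝ) with he
  have he_surj : ∀ z : ℚ, ∃ n, e n = (z : ℝ) := fun z =>
    ⟨Denumerable.eqv ℚ z, by simp [he]⟩
  -- a small open set containing all rationals
  set U : Set ℝ := ⋃ n, ball (e n) ((2:ℝ)⁻¹ ^ n / 16) with hU
  have hUopen : IsOpen U := isOpen_iUnion fun n => isOpen_ball
  have hUmem : ∀ z : ℚ, (z : ℝ) ∈ U := by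
    intro z
    obtain ⟨n, hn⟩ := he_surj z
    exact mem_iUnion.2 ⟨n, hn ▸ mem_ball_self (by positivity)⟩
  have hUvol : volume U ≤ 1 / 2 := by
    calc volume U ≤ ∑' n, volume (ball (e n) ((2:ℝ)⁻¹ ^ n / 16)) := measure_iUnion_le _
      _ = ∑' n, ENNReal.ofReal (2 * ((2:ℝ)⁻¹ ^ n / 16)) := by
          simp [Real.volume_ball]
      _ = ENNReal.ofReal (∑' n, 2 * ((2:ℝ)⁻¹ ^ n / 16)) := by
          rw [ENNReal.ofReal_tsum_of_nonneg (fun n => by positivity)]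
          exact ((summable_geometric_of_lt_one (r := (2:ℝ)⁻¹) (by norm_num)
            (by norm_num)).mul_left (2 / 16)).congr (fun n => by ring)
      _ ≤ 1 / 2 := by
          have hs : ∑' n, 2 * ((2:ℝ)⁻¹ ^ n / 16) = 1 / 4 := by
            have ht := tsum_geometric_of_lt_one (by norm_num : (0:ℝ) ≤ 2⁻¹) (by norm_num)
            calc (∑' n : ℕ, 2 * ((2:ℝ)⁻¹ ^ n / 16))
                = (2 / 16) * ∑' n : ℕ, (2:ℝ)⁻¹ ^ n := by
                  rw [← tsum_mul_left]; exact tsum_congr fun n => by ring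
              _ = 1 / 4 := by rw [ht]; norm_num
          rw [hs]
          rw [show (1:ENNReal) / 2 = ENNReal.ofReal (1 / 2) by
            rw [ENNReal.ofReal_div_of_pos (by norm_num)]; norm_num]
          exact ENNReal.ofReal_le_ofReal (by norm_num)
  -- the fat closed nowhere dense set
  set C : Set ℝ := Icc 0 1 \ U with hC
  have hCclosed : IsClosed C := isClosed_Icc.sdiff hUopen
  have hCsub : C ⊆ Icc 0 1 := diff_subset
  have hCvol : 0 < volume C := by
    by_contra h
    push_neg at h
    have h0 : volume C = 0 := le_antisymm h zero_le
    have h1 : volume (Icc (0:ℝ) 1) ≤ volume U + volume C :=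
      le_trans (measure_mono fun x hx => by
        by_cases hxU : x ∈ U
        · exact Or.inl hxU
        · exact Or.inr ⟨hx, hxU⟩) (measure_union_le _ _)
    rw [Real.volume_Icc, h0, add_zero] at h1
    simp only [sub_zero, ENNReal.ofReal_one] at h1
    have := le_trans h1 hUvol
    norm_num at this
  have hCne : C.Nonempty := nonempty_of_measure_ne_zero hCvol.ne'
  -- the integrand
  set f : ℝ → ℝ := fun x => infDist x C with hfdef
  have hflip : LipschitzWith 1 f := lipschitz_infDist_pt C
  have hfcont : Continuous f := hflip.continuous
  have hfnn : ∀ x, 0 ≤ f x := fun x => infDist_nonneg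
  have hfint : ∀ a b : ℝ, IntervalIntegrable f volume a b := fun a b =>
    hfcont.intervalIntegrable a b
  -- positivity of integrals of f over nondegenerate intervals
  have hpos : ∀ x y : ℝ, x < y → 0 < ∫ t in x..y, f t := by
    intro x y hxy
    rw [intervalIntegral.integral_pos_iff_support_of_nonneg_ae
      (Eventually.of_forall hfnn) (hfint x y)]
    refine ⟨hxy, ?_⟩
    obtain ⟨z, hz⟩ := exists_rat_btwn hxy
    have hzU : (z : ℝ) ∈ U := hUmem z
    have hopen : IsOpen (Ioo x y ∩ Cᶜ) := isOpen_Ioo.inter hCclosed.isOpen_compl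
    have hne : (Ioo x y ∩ Cᶜ).Nonempty :=
      ⟨z, ⟨hz.1, hz.2⟩, fun hzC => hzC.2 hzU⟩
    refine lt_of_lt_of_le (hopen.measure_pos volume hne) (measure_mono ?_)
    rintro w ⟨hw1, hw2⟩
    refine ⟨?_, hw1.1, hw1.2.le⟩
    intro hw0
    exact hw2 (hCclosed.closure_eq ▸ (mem_closure_iff_infDist_zero hCne).2 hw0)
  -- the primitive
  set g : ℝ → ℝ := fun x => ∫ t in (0:ℝ)..x, f t with hg
  have hgderiv : ∀ x : ℝ, HasDerivAt g (f x) x := fun x =>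
    intervalIntegral.integral_hasDerivAt_right (hfint 0 x)
      (hfcont.stronglyMeasurable.stronglyMeasurableAtFilter) hfcont.continuousAt
  have hgadd : ∀ x y : ℝ, g y - g x = ∫ t in x..y, f t := by
    intro x y
    have := intervalIntegral.integral_add_adjacent_intervals (hfint 0 x) (hfint x y)
    simp only [hg]
    linarith [this]
  have hq1 : 0 < g 1 := by
    have := hgadd 0 1
    have h0 : g 0 = 0 := intervalIntegral.integral_same
    have := hpos 0 1 one_pos
    rw [hgadd 0 1] at *
    linarith [hpos 0 1 one_pos, intervalIntegral.integral_same (a := (0:ℝ)) (f := f) (μ := volume)]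
  -- the normalized function
  set Q : ℝ → ℝ := fun x => (g 1)⁻¹ * g x with hQ
  set Q' : ℝ → ℝ := fun x => (g 1)⁻¹ * f x with hQ'
  have hQderiv : ∀ x : ℝ, HasDerivAt Q (Q' x) x := fun x => (hgderiv x).const_mul _
  have hQcont : Continuous Q :=
    continuous_iff_continuousAt.2 fun x => (hQderiv x).continuousAt
  have hQSM : StrictMono Q := by
    intro x y hxy
    have := hpos x y hxy
    have h := hgadd x y
    have : g x < g y := by linarith
    exact mul_lt_mul_of_pos_left this (inv_pos.2 hq1)
  have hQ0 : Q 0 = 0 := by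
    simp [hQ, hg, intervalIntegral.integral_same]
  have hQ1 : Q 1 = 1 := inv_mul_cancel₀ hq1.ne'
  have hQmaps : MapsTo Q (Icc 0 1) (Icc 0 1) := by
    intro x hx
    constructor
    · rw [← hQ0]; exact hQSM.monotone hx.1
    · rw [← hQ1]; exact hQSM.monotone hx.2
  -- the null set with fat preimage
  set A : Set ℝ := Q '' C with hA
  have hCcomp : IsCompact C := isCompact_Icc.diff hUopen
  have hAnull : volume A = 0 := by
    have := MeasureTheory.addHaar_image_eq_zero_of_det_fderivWithin_eq_zero
      (μ := volume) (f := Q) (s := C) (f' := fun _ => (0 : ℝ →L[ℝ] ℝ))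
      (fun x hx => ?_) (fun x hx => ?_)
    · exact this
    · have hfx : f x = 0 := infDist_zero_of_mem hx
      have : HasDerivAt Q 0 x := by simpa [hQ', hfx] using hQderiv x
      have hF : HasFDerivAt Q ((1 : ℝ →L[ℝ] ℝ).smulRight (0:ℝ)) x := this.hasFDerivAt
      have h0 : (1 : ℝ →L[ℝ] ℝ).smulRight (0:ℝ) = 0 := by ext; simp
      exact (h0 ▸ hF).hasFDerivWithinAt
    · show (0 : ℝ →L[ℝ] ℝ).det = 0
      simp only [ContinuousLinearMap.det, ContinuousLinearMap.coe_zero]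
      exact LinearMap.det_zero''
  have hQ'lip : LipschitzWith (‖(g 1)⁻¹‖₊ * 1) Q' := by
    refine LipschitzWith.of_dist_le_mul fun x y => ?_
    have hd := hflip.dist_le_mul x y
    have h1 : ((‖(g 1)⁻¹‖₊ * 1 : NNReal) : ℝ) = |(g 1)⁻¹| * 1 := by
      simp [Real.norm_eq_abs, abs_inv]
    rw [h1]
    simp only [hQ', Real.dist_eq] at *
    calc |(g 1)⁻¹ * f x - (g 1)⁻¹ * f y| = |(g 1)⁻¹| * |f x - f y| := by
          rw [← abs_mul]; ring_nf
      _ ≤ |(g 1)⁻¹| * 1 * |x - y| := by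
          rw [mul_assoc]
          exact mul_le_mul_of_nonneg_left (by simpa using hd) (abs_nonneg _)
  refine ⟨Q, Q', ‖(g 1)⁻¹‖₊ * 1, A, hQSM.strictMonoOn _, hQcont.continuousOn,
    ⟨hQmaps, hQSM.injective.injOn, ?_⟩,
    fun x _ => hQderiv x, ((continuous_const.mul hfcont).continuousOn), hQ'lip.lipschitzOnWith,
    ?_, (hCcomp.image hQcont).measurableSet, hAnull, ?_⟩
  · -- surjectivity
    intro y hy
    have := intermediate_value_Icc (zero_le_one) hQcont.continuousOn
    rw [hQ0, hQ1] at this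
    exact this hy
  · -- A ⊆ Icc 0 1
    rintro _ ⟨x, hx, rfl⟩
    exact hQmaps (hCsub hx)
  · -- positivity of the preimage
    refine lt_of_lt_of_le hCvol (measure_mono ?_)
    intro x hx
    exact ⟨hCsub hx, mem_image_of_mem Q hx⟩
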